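/- Let d ≥ 1 and 0 ≤ j < k ≤ d be integers. Working in the polynomial ring ℝ[X,Y], set P_m = (X−m)² + Y², R_m = (X−m−1+d)² + Y², and Q_m = P_m + R_m − d(d−1), and let D_{j,k} ∈ ℝ[X,Y] be the determinant of the (k−j−1)×(k−j−1) tridiagonal matrix with diagonal entries −Q_j, …, −Q_{k−2}, subdiagonal entries R_j, …, R_{k−3}, and superdiagonal entries P_{j+1}, …, P_{k−2} (with D_{j,j+1} = 1). Then the homogeneous component of total degree 2(k−j−1) of D_{j,k} equals (−1)^{k−j−1} · (k−j) · (X² + Y²)^{k−j−1}. -/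

import Mathlib

open MvPolynomial

/-- The `n × n` tridiagonal matrix with diagonal `-q j, …, -q (j+n-1)`,
superdiagonal `p (j+1), …, p (j+n-1)` and subdiagonal `r (j), …, r (j+n-2)`. -/
def tridiag {R : Type*} [CommRing R] (p q r : ℕ → R) (j n : ℕ) :
    Matrix (Fin n) (Fin n) R :=
  Matrix.of fun a b =>
    if (a : ℕ) = b then -q (j + a)
    else if (a : ℕ) + 1 = b then p (j + b)
    else if (b : ℕ) + 1 = a then r (j + b)
    else 0

/-- `P_m = (X - m)² + Y²` in `ℝ[X,Y]`. -/
noncomputable def Pm (m : ℕ) : MvPolynomial (Fin 2) ℝ :=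
  (X 0 - C (m : ℝ)) ^ 2 + (X 1) ^ 2

/-- `R_m = (X - m - 1 + d)² + Y²` in `ℝ[X,Y]`. -/
noncomputable def Rm (d m : ℕ) : MvPolynomial (Fin 2) ℝ :=
  (X 0 - C (m : ℝ) - 1 + C (d : ℝ)) ^ 2 + (X 1) ^ 2

/-- `Q_m = P_m + R_m - d(d-1)` in `ℝ[X,Y]`. -/
noncomputable def Qm (d m : ℕ) : MvPolynomial (Fin 2) ℝ :=
  Pm m + Rm d m - C ((d : ℝ) * ((d : ℝ) - 1))

lemma deg_add' {σ : Type*} (a b : σ →₀ ℕ) : (a + b).degree = a.degree + b.degree := by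
  simp [Finsupp.degree_eq_weight_one]

lemma hc_mul' {σ : Type*} {f g : MvPolynomial σ ℝ} {m n : ℕ}
    (hf : f.totalDegree ≤ m) (hg : g.totalDegree ≤ n) :
    homogeneousComponent (m + n) (f * g) =
      homogeneousComponent m f * homogeneousComponent n g := by
  classical
  ext d
  rw [coeff_homogeneousComponent, coeff_mul, coeff_mul]
  by_cases h : d.degree = m + n
  · rw [if_pos h]
    refine Finset.sum_congr rfl (fun x hx => ?_)
    rw [Finset.HasAntidiagonal.mem_antidiagonal] at hx
    rw [coeff_homogeneousComponent, coeff_homogeneousComponent]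
    have hsum : x.1.degree + x.2.degree = m + n := by rw [← deg_add', hx, h]
    rcases lt_trichotomy x.1.degree m with h1 | h1 | h1
    · have h2 : n < x.2.degree := by omega
      rw [coeff_eq_zero_of_totalDegree_lt (lt_of_le_of_lt hg h2)]
      simp
    · rw [if_pos h1, if_pos (by omega)]
    · rw [coeff_eq_zero_of_totalDegree_lt (lt_of_le_of_lt hf h1)]
      simp
  · rw [if_neg h]
    symm
    refine Finset.sum_eq_zero (fun x hx => ?_)
    rw [Finset.HasAntidiagonal.mem_antidiagonal] at hx
    rw [coeff_homogeneousComponent, coeff_homogeneousComponent]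
    split_ifs with h1 h2
    · exact absurd (by rw [← hx, deg_add', h1, h2]) h
    all_goals simp

lemma hc_prod' {σ ι : Type*} (s : Finset ι) (f : ι → MvPolynomial σ ℝ) (c : ι → ℕ)
    (h : ∀ i ∈ s, (f i).totalDegree ≤ c i) :
    homogeneousComponent (∑ i ∈ s, c i) (∏ i ∈ s, f i) =
      ∏ i ∈ s, homogeneousComponent (c i) (f i) := by
  classical
  induction s using Finset.induction with
  | empty => simp
  | insert _ _ hi ih =>
    rename_i a s
    rw [Finset.sum_insert hi, Finset.prod_insert hi, Finset.prod_insert hi,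
      hc_mul' (h a (Finset.mem_insert_self a s))
        (le_trans (totalDegree_finset_prod s f) (Finset.sum_le_sum
          (fun i his => h i (Finset.mem_insert_of_mem his)))),
      ih (fun i his => h i (Finset.mem_insert_of_mem his))]

lemma hc_det' {σ : Type*} {n : ℕ} (M : Matrix (Fin n) (Fin n) (MvPolynomial σ ℝ))
    (h : ∀ a b, (M a b).totalDegree ≤ 2) :
    homogeneousComponent (2 * n) M.det = (M.map (homogeneousComponent 2)).det := by
  rw [Matrix.det_apply, Matrix.det_apply, map_sum]
  refine Finset.sum_congr rfl fun σ' _ => ?_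
  rw [Units.smul_def, Units.smul_def, map_zsmul]
  congr 1
  have h2 : 2 * n = ∑ _i : Fin n, 2 := by simp [mul_comm]
  rw [h2, hc_prod' _ _ _ (fun i _ => h _ _)]
  simp [Matrix.map_apply]

lemma tridiag_det_rec {R : Type*} [CommRing R] (p q r : ℕ → R) (j n : ℕ) :
    (tridiag p q r j (n+2)).det
      = -q j * (tridiag p q r (j+1) (n+1)).det
        - p (j+1) * r j * (tridiag p q r (j+2) n).det := by
  have hsa1 : ∀ b : Fin n, (1 : Fin (n+2)).succAbove b.succ = b.succ.succ := by
    intro b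
    apply Fin.succAbove_of_le_castSucc
    rw [Fin.le_def]
    simp
  have hsa0 : (1 : Fin (n+2)).succAbove 0 = 0 := by
    apply Fin.succAbove_of_castSucc_lt
    rw [Fin.lt_def]
    simp
  rw [Matrix.det_succ_row_zero, Fin.sum_univ_succ, Fin.sum_univ_succ]
  have hz : ∀ i : Fin n, ((-1 : R) ^ (((i.succ.succ : Fin (n+2))) : ℕ)) *
      (tridiag p q r j (n+2)) 0 i.succ.succ *
      ((tridiag p q r j (n+2)).submatrix Fin.succ (Fin.succAbove i.succ.succ)).det = 0 := by
    intro i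
    simp [tridiag]
  rw [Finset.sum_congr rfl (fun i _ => hz i), Finset.sum_const_zero, add_zero]
  have hsub0 : (tridiag p q r j (n+2)).submatrix Fin.succ (Fin.succAbove 0)
      = tridiag p q r (j+1) (n+1) := by
    ext a b
    simp only [Matrix.submatrix_apply, Fin.succAbove_zero, tridiag, Matrix.of_apply,
      Fin.val_succ]
    split_ifs <;> first | omega | rfl | (congr 1; omega) | (congr 2; omega)
  have hA : ((tridiag p q r j (n+2)).submatrix Fin.succ (Fin.succAbove 1)).det
      = r j * (tridiag p q r (j+2) n).det := by
    rw [Matrix.det_succ_column_zero, Fin.sum_univ_succ]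
    have hz2 : ∀ i : Fin n, ((-1 : R) ^ ((i.succ : Fin (n+1)) : ℕ)) *
        ((tridiag p q r j (n+2)).submatrix Fin.succ (Fin.succAbove 1)) i.succ 0 *
        (((tridiag p q r j (n+2)).submatrix Fin.succ (Fin.succAbove 1)).submatrix
          (Fin.succAbove i.succ) Fin.succ).det = 0 := by
      intro i
      simp only [Matrix.submatrix_apply, hsa0, tridiag, Matrix.of_apply, Fin.val_succ,
        Fin.val_zero]
      simp
    rw [Finset.sum_congr rfl (fun i _ => hz2 i), Finset.sum_const_zero, add_zero]
    have hsub2 : ((tridiag p q r j (n+2)).submatrix Fin.succ (Fin.succAbove 1)).submatrix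
        (Fin.succAbove 0) Fin.succ = tridiag p q r (j+2) n := by
      ext a b
      rw [Matrix.submatrix_apply, Matrix.submatrix_apply, Fin.succAbove_zero, hsa1]
      simp only [tridiag, Matrix.of_apply, Fin.val_succ]
      split_ifs <;> first | omega | rfl | (congr 1; omega) | (congr 2; omega)
    have hentry : ((tridiag p q r j (n+2)).submatrix Fin.succ (Fin.succAbove 1)) 0 0 = r j := by
      rw [Matrix.submatrix_apply, hsa0]
      simp [tridiag]
    rw [hsub2, hentry]
    simp
  have hentry0 : (tridiag p q r j (n+2)) 0 0 = -q j := by simp [tridiag]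
  have hentry1 : (tridiag p q r j (n+2)) 0 1 = p (j+1) := by
    simp [tridiag]
  simp only [Fin.succ_zero_eq_one]
  rw [hsub0, hA, hentry0, hentry1]
  simp
  ring

lemma tridiag_one_two_one_det :
    ∀ n j : ℕ, (tridiag (fun _ => (1:ℝ)) (fun _ => 2) (fun _ => 1) j n).det
      = (-1)^n * (n+1) := by
  intro n
  induction n using Nat.strong_induction_on with
  | _ n ih =>
    match n with
    | 0 => intro j; simp
    | 1 =>
      intro j
      simp [Matrix.det_fin_one, tridiag]
      norm_num
    | (m+2) =>
      intro j
      rw [tridiag_det_rec, ih (m+1) (by omega), ih m (by omega)]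
      push_cast
      ring

lemma lin_deg (a b : ℝ) (i : Fin 2) :
    (C a * X i + C b : MvPolynomial (Fin 2) ℝ).totalDegree ≤ 1 := by
  refine le_trans (totalDegree_add _ _) (max_le ?_ ?_)
  · refine le_trans (totalDegree_mul _ _) ?_
    simp [totalDegree_C, totalDegree_X]
  · simp [totalDegree_C]

lemma hcS : homogeneousComponent 2 ((X 0)^2 + (X 1)^2 : MvPolynomial (Fin 2) ℝ)
    = (X 0)^2 + (X 1)^2 := by
  have hS : (((X 0)^2 + (X 1)^2 : MvPolynomial (Fin 2) ℝ)).IsHomogeneous 2 := by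
    have h0 : ((X 0 : MvPolynomial (Fin 2) ℝ)^2).IsHomogeneous 2 := by
      simpa using (isHomogeneous_X ℝ (0 : Fin 2)).pow 2
    have h1 : ((X 1 : MvPolynomial (Fin 2) ℝ)^2).IsHomogeneous 2 := by
      simpa using (isHomogeneous_X ℝ (1 : Fin 2)).pow 2
    exact h0.add h1
  rw [homogeneousComponent_of_mem ((mem_homogeneousSubmodule _ _).2 hS), if_pos rfl]

lemma Pm_decomp (m : ℕ) : Pm m = ((X 0)^2 + (X 1)^2)
    + (C (-(2*(m:ℝ))) * X 0 + C ((m:ℝ)*(m:ℝ))) := by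
  simp only [Pm, map_neg, map_mul, map_ofNat]
  ring

lemma Rm_decomp (d m : ℕ) : Rm d m = ((X 0)^2 + (X 1)^2)
    + (C (2*((d:ℝ) - m - 1)) * X 0 + C (((d:ℝ) - m - 1)*((d:ℝ) - m - 1))) := by
  simp only [Rm, map_mul, map_sub, map_one, map_ofNat]
  ring

lemma hcP (m : ℕ) : homogeneousComponent 2 (Pm m) = (X 0)^2 + (X 1)^2 := by
  rw [Pm_decomp, map_add, hcS,
    homogeneousComponent_eq_zero _ _ (lt_of_le_of_lt (lin_deg _ _ _) one_lt_two), add_zero]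

lemma hcR (d m : ℕ) : homogeneousComponent 2 (Rm d m) = (X 0)^2 + (X 1)^2 := by
  rw [Rm_decomp, map_add, hcS,
    homogeneousComponent_eq_zero _ _ (lt_of_le_of_lt (lin_deg _ _ _) one_lt_two), add_zero]

lemma hcQ (d m : ℕ) : homogeneousComponent 2 (Qm d m) = 2 * ((X 0)^2 + (X 1)^2) := by
  rw [Qm, map_sub, map_add, hcP, hcR,
    homogeneousComponent_eq_zero _ _ (by rw [totalDegree_C]; omega)]
  ring

lemma degP (m : ℕ) : (Pm m).totalDegree ≤ 2 := by
  rw [Pm_decomp]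
  refine le_trans (totalDegree_add _ _) (max_le ?_ (le_trans (lin_deg _ _ _) one_le_two))
  refine le_trans (totalDegree_add _ _) (max_le ?_ ?_) <;>
    exact le_trans (totalDegree_pow _ _) (by simp [totalDegree_X])

lemma degR (d m : ℕ) : (Rm d m).totalDegree ≤ 2 := by
  rw [Rm_decomp]
  refine le_trans (totalDegree_add _ _) (max_le ?_ (le_trans (lin_deg _ _ _) one_le_two))
  refine le_trans (totalDegree_add _ _) (max_le ?_ ?_) <;>
    exact le_trans (totalDegree_pow _ _) (by simp [totalDegree_X])

lemma degQ (d m : ℕ) : (Qm d m).totalDegree ≤ 2 := by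
  rw [Qm]
  refine le_trans (totalDegree_sub _ _) (max_le ?_ (by rw [totalDegree_C]; omega))
  exact le_trans (totalDegree_add _ _) (max_le (degP m) (degR d m))

/-- Lemma 4.1: the top homogeneous component (of degree `2(k-j-1)`) of `D_{j,k}`
for the binomial coefficient basis is `(-1)^{k-j-1} (k-j) (X² + Y²)^{k-j-1}`. -/
theorem stmt_10 (d j k : ℕ) (hd : 1 ≤ d) (hjk : j < k) (hkd : k ≤ d) :
    MvPolynomial.homogeneousComponent (2 * (k - j - 1))
        ((tridiag Pm (Qm d) (Rm d) j (k - j - 1)).det)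
      = (-1) ^ (k - j - 1) * ((k - j : ℕ) : MvPolynomial (Fin 2) ℝ) *
          ((X 0) ^ 2 + (X 1) ^ 2) ^ (k - j - 1) := by
  set n := k - j - 1 with hn
  set S : MvPolynomial (Fin 2) ℝ := (X 0)^2 + (X 1)^2 with hSdef
  have hdeg : ∀ a b, ((tridiag Pm (Qm d) (Rm d) j n) a b).totalDegree ≤ 2 := by
    intro a b
    simp only [tridiag, Matrix.of_apply]
    split_ifs
    · rw [totalDegree_neg]; exact degQ _ _
    · exact degP _
    · exact degR _ _
    · simp
  rw [hc_det' _ hdeg]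
  have hmap : (tridiag Pm (Qm d) (Rm d) j n).map (homogeneousComponent 2)
      = S • ((tridiag (fun _ => (1:ℝ)) (fun _ => 2) (fun _ => 1) j n).map
          (C : ℝ →+* MvPolynomial (Fin 2) ℝ)) := by
    ext a b : 1
    simp only [Matrix.map_apply, Matrix.smul_apply, smul_eq_mul, tridiag, Matrix.of_apply]
    split_ifs
    · rw [map_neg, hcQ, map_neg, map_ofNat]; ring
    · rw [hcP, map_one]; ring
    · rw [hcR, map_one]; ring
    · simp
  rw [hmap, Matrix.det_smul, ← RingHom.mapMatrix_apply, ← RingHom.map_det, tridiag_one_two_one_det]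
  have hk : k - j = n + 1 := by omega
  rw [hk]
  simp only [Fintype.card_fin, map_mul, map_pow, map_neg, map_one, map_add, map_natCast]
  push_cast
  ring
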